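/- Under the hypotheses of the flux identity (the two finite recursions with boundary conditions a₀ = b₀ = 1, a_N = a_{N+1} = 0, b_{N+1} = 0), the total fluxes balance: uν₀ ∑_{n=1}^N aₙ₋₁ bₙ = uν₁ ∑_{n=1}^N (aₙ₋₁ − aₙ)(bₙ₋₁ − bₙ). -/

import Mathlib

theorem stmt7 (N : ℕ) (hN : 0 < N) (s u ν₀ ν₁ : ℝ) (hs : 0 < s) (hu : 0 < u)
    (hν₀ : 0 < ν₀) (hν₀1 : ν₀ < 1) (hν₁ : 0 < ν₁) (hν₁1 : ν₁ < 1) (hν : ν₀ + ν₁ = 1)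
    (a b : ℕ → ℝ) (ha0 : a 0 = 1) (haN : a N = 0) (haN1 : a (N+1) = 0)
    (hb0 : b 0 = 1) (hbN1 : b (N+1) = 0)
    (hreca : ∀ n : ℕ, 0 < n → n < N →
      (((n:ℝ)+1)/N + s*((N:ℝ)-n)/N + u) * a n
        = (((n:ℝ)+1)/N + u*ν₁) * a (n+1) + s*(((N:ℝ)-n)/N) * a (n-1))
    (hrecb : ∀ n : ℕ, 0 < n → n ≤ N →
      (((n:ℝ)-1)/N + s*((N:ℝ)-n)/N + u) * b n
        = (((n:ℝ)-1)/N + u*ν₁) * b (n-1) + s*(((N:ℝ)-n)/N) * b (n+1)) :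
    u*ν₀ * ∑ n ∈ Finset.Icc 1 N, a (n-1) * b n
      = u*ν₁ * ∑ n ∈ Finset.Icc 1 N, (a (n-1) - a n) * (b (n-1) - b n) := by
  have hNne : (N:ℝ) ≠ 0 := Nat.cast_ne_zero.mpr hN.ne'
  -- extend the a-recursion to n = N using the boundary conditions
  have hreca' : ∀ n : ℕ, 0 < n → n ≤ N →
      (((n:ℝ)+1)/N + s*((N:ℝ)-n)/N + u) * a n
        = (((n:ℝ)+1)/N + u*ν₁) * a (n+1) + s*(((N:ℝ)-n)/N) * a (n-1) := by
    intro n hn hnN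
    rcases lt_or_eq_of_le hnN with h | rfl
    · exact hreca n hn h
    · rw [haN, haN1]
      simp
  -- the telescoping potential (multiplied by N)
  set S : ℕ → ℝ := fun k =>
    (-(k:ℝ)) * ((u*ν₁*N + ((k:ℝ)+1)) * (a k * b k - a (k+1) * b k + a (k+1) * b (k+1))
      - (u*N + ((k:ℝ)+1)) * (a k * b (k+1))) with hSdef
  -- pointwise identity
  have key : ∀ i : ℕ, i < N →
      (N:ℝ) * (u*ν₀ * (a i * b (i+1)) - u*ν₁ * ((a i - a (i+1)) * (b i - b (i+1))))
        = S (i+1) - S i := by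
    intro i hi
    have hEa := hreca' (i+1) (Nat.succ_pos i) (Nat.succ_le_of_lt hi)
    have hEb := hrecb (i+1) (Nat.succ_pos i) (Nat.succ_le_of_lt hi)
    simp only [Nat.add_sub_cancel] at hEa hEb
    push_cast at hEa hEb
    -- clear denominators in the recursions
    have hEa' : (((i:ℝ)+1+1) + s*((N:ℝ)-(i+1)) + u*N) * a (i+1)
        = (((i:ℝ)+1+1) + u*ν₁*N) * a (i+2) + s*((N:ℝ)-(i+1)) * a i := by
      field_simp at hEa
      linear_combination hEa
    have hEb' : (((i:ℝ)+1-1) + s*((N:ℝ)-(i+1)) + u*N) * b (i+1)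
        = (((i:ℝ)+1-1) + u*ν₁*N) * b i + s*((N:ℝ)-(i+1)) * b (i+2) := by
      field_simp at hEb
      linear_combination hEb
    simp only [hSdef]
    push_cast
    linear_combination ((i:ℝ)+1)*(a i - a (i+1))*hEb' + ((i:ℝ)+1)*(b (i+1) - b (i+2))*hEa'
      + (N:ℝ)*u*(a i * b (i+1))*hν
  -- telescope
  have tele : ∑ i ∈ Finset.range N,
      ((N:ℝ) * (u*ν₀ * (a i * b (i+1)) - u*ν₁ * ((a i - a (i+1)) * (b i - b (i+1))))) = 0 := by
    rw [Finset.sum_congr rfl (fun i hi => key i (Finset.mem_range.mp hi)),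
      Finset.sum_range_sub S]
    simp only [hSdef, haN, haN1]
    push_cast
    ring
  rw [← Finset.mul_sum, mul_eq_zero] at tele
  rcases tele with h | h
  · exact absurd h hNne
  · have hsum : ∑ i ∈ Finset.range N,
        (u*ν₀ * (a i * b (i+1)) - u*ν₁ * ((a i - a (i+1)) * (b i - b (i+1)))) = 0 := h
    have hIcc : ∀ f : ℕ → ℝ, ∑ n ∈ Finset.Icc 1 N, f n = ∑ i ∈ Finset.range N, f (i+1) := by
      intro f
      rw [← Finset.Ico_add_one_right_eq_Icc, Finset.sum_Ico_eq_sum_range]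
      simp [add_comm]
    rw [hIcc, hIcc]
    have expand : ∀ i : ℕ, a ((i+1)-1) * b (i+1) = a i * b (i+1) := by
      intro i; simp
    have expand2 : ∀ i : ℕ, (a ((i+1)-1) - a (i+1)) * (b ((i+1)-1) - b (i+1))
        = (a i - a (i+1)) * (b i - b (i+1)) := by
      intro i; simp
    simp only [expand, expand2]
    rw [Finset.mul_sum, Finset.mul_sum, ← sub_eq_zero, ← Finset.sum_sub_distrib]
    calc ∑ i ∈ Finset.range N, (u*ν₀ * (a i * b (i+1)) - u*ν₁ * ((a i - a (i+1)) * (b i - b (i+1)))) = 0 := hsum
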